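/- Let ω > 0 with ω² ≤ 1/16, and let (r, v) : ℝ_{≥0} → ℝ² solve r' = -(ω² v + r/2), v' = r, with (r(0), v(0)) ≠ (0,0). Then liminf_{τ→∞} (∫_0^τ r(s)² ds) / (∫_0^τ v(s)² ds) > 0. -/

import Mathlib

open Filter MeasureTheory Set intervalIntegral

private lemma aux_int {f : ℝ → ℝ} (hf : ∀ t ∈ Set.Ici (0:ℝ), ContinuousAt f t)
    {a b : ℝ} (ha : 0 ≤ a) (hab : a ≤ b) :
    IntervalIntegrable (fun s => f s ^ 2) MeasureTheory.volume a b := by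
  apply ContinuousOn.intervalIntegrable
  intro x hx
  rw [Set.uIcc_of_le hab] at hx
  exact ((hf x (le_trans ha hx.1)).continuousWithinAt).pow 2

private lemma aux_deriv {f : ℝ → ℝ} (hf : ∀ t ∈ Set.Ici (0:ℝ), ContinuousAt f t)
    {x : ℝ} (hx : 0 ≤ x) :
    HasDerivWithinAt (fun u => ∫ s in (0:ℝ)..u, f s ^ 2) (f x ^ 2) (Set.Ici x) x := by
  refine intervalIntegral.integral_hasDerivWithinAt_right (aux_int hf le_rfl hx) ?_ ?_
  · refine ⟨Set.Ici x, Filter.mem_of_superset self_mem_nhdsWithin Set.Ioi_subset_Ici_self, ?_⟩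
    refine ContinuousOn.aestronglyMeasurable ?_ measurableSet_Ici
    intro y hy
    exact ((hf y (le_trans hx hy)).continuousWithinAt).pow 2
  · exact ((hf x hx).continuousWithinAt).pow 2

private lemma aux_mono {f : ℝ → ℝ} (hf : ∀ t ∈ Set.Ici (0:ℝ), ContinuousAt f t)
    {a b : ℝ} (ha : 0 ≤ a) (hab : a ≤ b) :
    (∫ s in (0:ℝ)..a, f s ^ 2) ≤ ∫ s in (0:ℝ)..b, f s ^ 2 := by
  have h := intervalIntegral.integral_add_adjacent_intervals
    (aux_int hf le_rfl ha) (aux_int hf ha hab)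
  have h2 : 0 ≤ ∫ s in a..b, f s ^ 2 :=
    intervalIntegral.integral_nonneg hab fun u _ => sq_nonneg _
  linarith

private lemma aux_contprim {f : ℝ → ℝ} (hf : ∀ t ∈ Set.Ici (0:ℝ), ContinuousAt f t)
    {b : ℝ} (hb : 0 ≤ b) :
    ContinuousOn (fun u => ∫ s in (0:ℝ)..u, f s ^ 2) (Set.Icc 0 b) := by
  have h : IntegrableOn (fun s => f s ^ 2) (Set.uIcc 0 b) MeasureTheory.volume := by
    rw [Set.uIcc_of_le hb]
    exact (intervalIntegrable_iff_integrableOn_Icc_of_le hb).mp (aux_int hf le_rfl hb)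
  have := intervalIntegral.continuousOn_primitive_interval h
  rwa [Set.uIcc_of_le hb] at this

private lemma aux_pos {f : ℝ → ℝ} (hf : ∀ t ∈ Set.Ici (0:ℝ), ContinuousAt f t)
    {t₀ : ℝ} (ht₀ : t₀ ∈ Set.Ico (0:ℝ) 1) (hne : f t₀ ≠ 0) :
    0 < ∫ s in (0:ℝ)..1, f s ^ 2 := by
  have hev : ∀ᶠ x in nhds t₀, f x ≠ 0 := (hf t₀ ht₀.1).eventually_ne hne
  rw [Metric.eventually_nhds_iff] at hev
  obtain ⟨ε, hε, hball⟩ := hev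
  set b := min (t₀ + ε) 1 with hbdef
  have ht₀b : t₀ < b := lt_min (by linarith) ht₀.2
  rw [intervalIntegral.integral_of_le (by norm_num : (0:ℝ) ≤ 1)]
  have hint : IntegrableOn (fun s => f s ^ 2) (Set.Ioc 0 1) MeasureTheory.volume :=
    (intervalIntegrable_iff_integrableOn_Ioc_of_le (by norm_num)).mp
      (aux_int hf le_rfl (by norm_num))
  refine (MeasureTheory.setIntegral_pos_iff_support_of_nonneg_ae
    (Filter.Eventually.of_forall fun x => sq_nonneg _) hint).mpr ?_
  have hsub : Set.Ioo t₀ b ⊆ Function.support (fun s => f s ^ 2) ∩ Set.Ioc 0 1 := by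
    intro x hx
    refine ⟨pow_ne_zero _ (hball ?_), lt_of_le_of_lt ht₀.1 hx.1,
      le_of_lt (lt_of_lt_of_le hx.2 (min_le_right _ _))⟩
    rw [Real.dist_eq, abs_lt]
    constructor
    · linarith [hx.1]
    · have : x < t₀ + ε := lt_of_lt_of_le hx.2 (min_le_left _ _)
      linarith
  calc (0:ENNReal) < volume (Set.Ioo t₀ b) := by
        rw [Real.volume_Ioo]
        exact ENNReal.ofReal_pos.mpr (by linarith)
    _ ≤ _ := measure_mono hsub

/-- Lefevere–Schenkel limiting mode, real-eigenvalue case `ω² ≤ 1/16`: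
the time-averaged ratio of `r²` over `v²` has positive liminf. -/
theorem stmt3 (ω : ℝ) (hω : 0 < ω) (hω2 : ω ^ 2 ≤ 1 / 16)
    (r v : ℝ → ℝ)
    (hr : ∀ t, 0 ≤ t → HasDerivAt r (-(ω ^ 2 * v t + r t / 2)) t)
    (hv : ∀ t, 0 ≤ t → HasDerivAt v (r t) t)
    (h0 : ¬(r 0 = 0 ∧ v 0 = 0)) :
    0 < Filter.liminf
      (fun τ : ℝ => (∫ s in (0:ℝ)..τ, (r s) ^ 2) / (∫ s in (0:ℝ)..τ, (v s) ^ 2))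
      Filter.atTop := by
  have hω2' : (0:ℝ) < ω ^ 2 := by positivity
  have hrc : ∀ t ∈ Set.Ici (0:ℝ), ContinuousAt r t := fun t ht => (hr t ht).continuousAt
  have hvc : ∀ t ∈ Set.Ici (0:ℝ), ContinuousAt v t := fun t ht => (hv t ht).continuousAt
  set F : ℝ → ℝ := fun τ => ∫ s in (0:ℝ)..τ, (r s) ^ 2 with hFdef
  set G : ℝ → ℝ := fun τ => ∫ s in (0:ℝ)..τ, (v s) ^ 2 with hGdef
  have hF0 : F 0 = 0 := intervalIntegral.integral_same
  have hG0 : G 0 = 0 := intervalIntegral.integral_same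
  -- Energy identity: F τ + r τ ^ 2 + ω² v τ ^ 2 = r 0 ^ 2 + ω² v 0 ^ 2
  have key1 : ∀ τ : ℝ, 0 ≤ τ →
      F τ + (r τ ^ 2 + ω ^ 2 * v τ ^ 2) = r 0 ^ 2 + ω ^ 2 * v 0 ^ 2 := by
    intro τ hτ
    have hcont : ContinuousOn
        (fun t => F t + (r t ^ 2 + ω ^ 2 * v t ^ 2)) (Set.Icc 0 τ) := by
      refine (aux_contprim hrc hτ).add (ContinuousOn.add ?_ (continuousOn_const.mul ?_))
      · exact fun x hx => ((hrc x hx.1).continuousWithinAt).pow 2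
      · exact fun x hx => ((hvc x hx.1).continuousWithinAt).pow 2
    have hder : ∀ x ∈ Set.Ico (0:ℝ) τ, HasDerivWithinAt
        (fun t => F t + (r t ^ 2 + ω ^ 2 * v t ^ 2)) 0 (Set.Ici x) x := by
      intro x hx
      have h1 := aux_deriv hrc hx.1
      have h2 := (((hr x hx.1).pow 2).hasDerivWithinAt (s := Set.Ici x))
      have h3 := ((((hv x hx.1).pow 2).hasDerivWithinAt (s := Set.Ici x)).const_mul (ω ^ 2))
      have h := h1.add (h2.add h3)
      refine h.congr_deriv ?_
      push_cast
      ring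
    have := constant_of_has_deriv_right_zero hcont hder τ ⟨hτ, le_rfl⟩
    simpa [hF0] using this
  -- Second identity
  have key2 : ∀ τ : ℝ, 0 ≤ τ →
      F τ - (ω ^ 2 * G τ + r τ * v τ + v τ ^ 2 / 4)
        = -(r 0 * v 0) - v 0 ^ 2 / 4 := by
    intro τ hτ
    have hcont : ContinuousOn
        (fun t => F t - (ω ^ 2 * G t + r t * v t + v t ^ 2 / 4)) (Set.Icc 0 τ) := by
      refine (aux_contprim hrc hτ).sub (ContinuousOn.add (ContinuousOn.add
        (continuousOn_const.mul (aux_contprim hvc hτ)) ?_) ?_)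
      · exact fun x hx => ((hrc x hx.1).continuousWithinAt).mul ((hvc x hx.1).continuousWithinAt)
      · exact ContinuousOn.div_const
          (fun x hx => ((hvc x hx.1).continuousWithinAt).pow 2) 4
    have hder : ∀ x ∈ Set.Ico (0:ℝ) τ, HasDerivWithinAt
        (fun t => F t - (ω ^ 2 * G t + r t * v t + v t ^ 2 / 4)) 0 (Set.Ici x) x := by
      intro x hx
      have h1 := aux_deriv hrc hx.1
      have h2 := ((aux_deriv hvc hx.1).const_mul (ω ^ 2))
      have h3 := (((hr x hx.1).mul (hv x hx.1)).hasDerivWithinAt (s := Set.Ici x))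
      have h4 := ((((hv x hx.1).pow 2).hasDerivWithinAt (s := Set.Ici x)).div_const 4)
      have h := h1.sub ((h2.add h3).add h4)
      refine h.congr_deriv ?_
      push_cast
      ring
    have h5 := constant_of_has_deriv_right_zero hcont hder τ ⟨hτ, le_rfl⟩
    simp only [hF0, hG0] at h5
    linarith
  set K : ℝ := r 0 ^ 2 + ω ^ 2 * v 0 ^ 2 with hKdef
  have hFK : ∀ τ : ℝ, 0 ≤ τ → F τ ≤ K := by
    intro τ hτ
    have := key1 τ hτ
    nlinarith [sq_nonneg (r τ), sq_nonneg (v τ)]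
  have hrK : ∀ τ : ℝ, 0 ≤ τ → r τ ^ 2 ≤ K := by
    intro τ hτ
    have := key1 τ hτ
    have hFnn : 0 ≤ F τ := intervalIntegral.integral_nonneg hτ fun u _ => sq_nonneg _
    nlinarith [sq_nonneg (v τ)]
  have hvK : ∀ τ : ℝ, 0 ≤ τ → v τ ^ 2 ≤ K / ω ^ 2 := by
    intro τ hτ
    have := key1 τ hτ
    have hFnn : 0 ≤ F τ := intervalIntegral.integral_nonneg hτ fun u _ => sq_nonneg _
    rw [le_div_iff₀ hω2']
    nlinarith [sq_nonneg (r τ)]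
  -- uniform bound on G
  set B : ℝ := (K + (K + K / ω ^ 2) / 2 + |r 0 * v 0| + v 0 ^ 2 / 4) / ω ^ 2 with hBdef
  have hGB : ∀ τ : ℝ, 0 ≤ τ → G τ ≤ B := by
    intro τ hτ
    have h2 := key2 τ hτ
    have habs : -(r τ * v τ) ≤ (r τ ^ 2 + v τ ^ 2) / 2 := by nlinarith [sq_nonneg (r τ + v τ)]
    have h3 : ω ^ 2 * G τ ≤ K + (K + K / ω ^ 2) / 2 + |r 0 * v 0| + v 0 ^ 2 / 4 := by
      have := hFK τ hτ
      have := hrK τ hτ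
      have := hvK τ hτ
      have := le_abs_self (r 0 * v 0)
      have := sq_nonneg (v τ)
      linarith
    rw [hBdef, le_div_iff₀ hω2']
    linarith
  -- existence of nonvanishing points in [0,1)
  have hrex : ∃ t₀ ∈ Set.Ico (0:ℝ) 1, r t₀ ≠ 0 := by
    by_contra h
    push_neg at h
    have hv0 : ∀ t ∈ Set.Ioo (0:ℝ) 1, v t = 0 := by
      intro t ht
      have h1 : HasDerivAt r 0 t := by
        refine (hasDerivAt_const t (0:ℝ)).congr_of_eventuallyEq ?_
        filter_upwards [Ioo_mem_nhds ht.1 ht.2] with x hx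
        exact h x ⟨le_of_lt hx.1, hx.2⟩
      have h2 := (hr t (le_of_lt ht.1)).unique h1
      have hrt : r t = 0 := h t ⟨le_of_lt ht.1, ht.2⟩
      have : ω ^ 2 * v t = 0 := by rw [hrt] at h2; linarith
      exact (mul_eq_zero.mp this).resolve_left (ne_of_gt hω2') 
    have hv00 : v 0 = 0 := by
      have hcv : Filter.Tendsto v (nhdsWithin 0 (Set.Ioi 0)) (nhds (v 0)) :=
        ((hv 0 le_rfl).continuousAt).continuousWithinAt
      have h2 : Filter.Tendsto v (nhdsWithin 0 (Set.Ioi 0)) (nhds 0) := by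
        refine Filter.Tendsto.congr' ?_ tendsto_const_nhds
        filter_upwards [Ioo_mem_nhdsGT_of_mem
          (show (0:ℝ) ∈ Set.Ico (0:ℝ) 1 from ⟨le_rfl, one_pos⟩)] with x hx
        exact (hv0 x hx).symm
      exact tendsto_nhds_unique hcv h2
    exact h0 ⟨h 0 ⟨le_rfl, one_pos⟩, hv00⟩
  have hvex : ∃ t₀ ∈ Set.Ico (0:ℝ) 1, v t₀ ≠ 0 := by
    by_contra h
    push_neg at h
    have hr0 : ∀ t ∈ Set.Ioo (0:ℝ) 1, r t = 0 := by
      intro t ht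
      have h1 : HasDerivAt v 0 t := by
        refine (hasDerivAt_const t (0:ℝ)).congr_of_eventuallyEq ?_
        filter_upwards [Ioo_mem_nhds ht.1 ht.2] with x hx
        exact h x ⟨le_of_lt hx.1, hx.2⟩
      exact ((hv t (le_of_lt ht.1)).unique h1)
    have hr00 : r 0 = 0 := by
      have hcr : Filter.Tendsto r (nhdsWithin 0 (Set.Ioi 0)) (nhds (r 0)) :=
        ((hr 0 le_rfl).continuousAt).continuousWithinAt
      have h2 : Filter.Tendsto r (nhdsWithin 0 (Set.Ioi 0)) (nhds 0) := by
        refine Filter.Tendsto.congr' ?_ tendsto_const_nhds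
        filter_upwards [Ioo_mem_nhdsGT_of_mem
          (show (0:ℝ) ∈ Set.Ico (0:ℝ) 1 from ⟨le_rfl, one_pos⟩)] with x hx
        exact (hr0 x hx).symm
      exact tendsto_nhds_unique hcr h2
    exact h0 ⟨hr00, h 0 ⟨le_rfl, one_pos⟩⟩
  obtain ⟨t₀, ht₀, hrne⟩ := hrex
  obtain ⟨t₁, ht₁, hvne⟩ := hvex
  have hF1 : 0 < F 1 := aux_pos hrc ht₀ hrne
  have hG1 : 0 < G 1 := aux_pos hvc ht₁ hvne
  have hB : 0 < B := lt_of_lt_of_le hG1 (hGB 1 (by norm_num))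
  show 0 < Filter.liminf (fun τ : ℝ => F τ / G τ) Filter.atTop
  have hlow : ∀ᶠ τ in Filter.atTop, F 1 / B ≤ F τ / G τ := by
    filter_upwards [Filter.eventually_ge_atTop (1:ℝ)] with τ hτ
    have hτ0 : (0:ℝ) ≤ τ := le_trans zero_le_one hτ
    have hGτ : 0 < G τ := lt_of_lt_of_le hG1 (aux_mono hvc (by norm_num) hτ)
    have hFτ : F 1 ≤ F τ := aux_mono hrc (by norm_num) hτ
    rw [div_le_div_iff₀ hB hGτ]
    exact mul_le_mul hFτ (hGB τ hτ0) (le_of_lt hGτ) (le_trans (le_of_lt hF1) hFτ)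
  have hcb : Filter.IsCoboundedUnder (· ≥ ·) Filter.atTop (fun τ : ℝ => F τ / G τ) := by
    apply Filter.isCoboundedUnder_ge_of_eventually_le (l := Filter.atTop) (x := K / G 1)
    filter_upwards [Filter.eventually_ge_atTop (1:ℝ)] with τ hτ
    have hτ0 : (0:ℝ) ≤ τ := le_trans zero_le_one hτ
    have hGτ : G 1 ≤ G τ := aux_mono hvc (by norm_num) hτ
    have hK0 : 0 ≤ K := le_trans (le_of_lt hF1) (hFK 1 zero_le_one)
    exact div_le_div₀ hK0 (hFK τ hτ0) hG1 hGτ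
  calc (0:ℝ) < F 1 / B := by positivity
    _ ≤ _ := Filter.le_liminf_of_le hcb hlow
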